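/- arXiv:2203.11927 — 5 statements merged into one kernel-verified Lean document; each statement's English description precedes it below -/
import Mathlib

section
/- (Theorem 1.6) Suppose σ_1, …, σ_r satisfy property I with witnesses α_1, …, α_r. Then in ℤ[t,t⁻¹]: χ_c(S)(t) = t^n · Σ_{I⊆{1,…,r}} (−1)^{|I|} t^{−|α_I|} (the term I = ∅ contributing 1); that is, χ_c(S)(t) = t^n K(t^{−1}), where K(x) = Σ_{I⊆{1,…,r}} (−1)^{|I|} x^{|α_I|} is the numerator of the Hilbert–Poincaré series of the Stanley–Reisner ring of the auxiliary complex with minimal nonfaces α_1, …, α_r. -/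
open Finset LaurentPolynomial

noncomputable section

/-- The union `σ_I = ⋃_{i ∈ I} σ_i`. -/
def unionOver {ι V : Type*} [DecidableEq V] (σ : ι → Finset V) (I : Finset ι) : Finset V :=
  I.sup σ

/-- The intersection graph `G_I` on the vertex set `I`. -/
def interGraph {ι V : Type*} [DecidableEq V] (σ : ι → Finset V) (I : Finset ι) :
    SimpleGraph {i // i ∈ I} where
  Adj i j := i ≠ j ∧ (σ i.1 ∩ σ j.1).Nonempty
  symm := by
    constructor
    intro i j h
    exact ⟨h.1.symm, by rw [Finset.inter_comm]; exact h.2⟩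
  loopless := by constructor; intro i h; exact h.1 rfl

/-- `c(I)`, the number of connected components of `G_I`. -/
def compCount {ι V : Type*} [DecidableEq V] (σ : ι → Finset V) (I : Finset ι) : ℕ :=
  Nat.card (interGraph σ I).ConnectedComponent

/-- Property I. -/
def PropertyI {ι V W : Type*} [DecidableEq V] [DecidableEq W]
    (σ : ι → Finset V) (α : ι → Finset W) : Prop :=
  (∀ i, (α i).card + 1 = (σ i).card) ∧
  ∀ I : Finset ι, I.Nonempty → ∀ p ∉ I,
    (unionOver σ I ∩ σ p = ∅ → unionOver α I ∩ α p = ∅) ∧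
    ((unionOver σ I ∩ σ p).Nonempty →
      (unionOver α I ∩ α p).card + 1 = (unionOver σ I ∩ σ p).card)

/-- The simplicial chromatic polynomial. -/
def simpChrom {ι : Type*} [Fintype ι] [DecidableEq ι] {n : ℕ} (σ : ι → Finset (Fin n)) :
    LaurentPolynomial ℤ :=
  T (n : ℤ) +
  ∑ I ∈ (univ : Finset ι).powerset.filter (fun I => I.Nonempty),
    (-1) ^ I.card *
      T ((n : ℤ) - ((unionOver σ I).card : ℤ) + (compCount σ I : ℤ))

/-- Faces of the complex whose minimal nonfaces are the `α i`. -/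
def facesOf {ι : Type*} [Fintype ι] {N : ℕ} (α : ι → Finset (Fin N)) :
    Finset (Finset (Fin N)) :=
  (univ : Finset (Finset (Fin N))).filter (fun F => ∀ i, ¬ α i ⊆ F)

/-- Coefficient of `t^k` in a Laurent polynomial. -/
def lcoeff (p : LaurentPolynomial ℤ) (k : ℤ) : ℤ := p.coeff k

end

section Lemmas

variable {ι V : Type*} [DecidableEq ι] [DecidableEq V] (σ : ι → Finset V)

lemma reach_lift_const {V' : Type*} {β : Sort*} {G : SimpleGraph V'} (f : V' → β)
    (h : ∀ a b, G.Adj a b → f a = f b) :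
    ∀ a b, G.Reachable a b → f a = f b := by
  intro a b r
  obtain ⟨w⟩ := r
  induction w with
  | nil => rfl
  | cons ha q ih => exact (h _ _ ha).trans ih

noncomputable def ccLift {V' : Type*} {β : Sort*} {G : SimpleGraph V'} (f : V' → β)
    (h : ∀ a b, G.Adj a b → f a = f b) : G.ConnectedComponent → β :=
  SimpleGraph.ConnectedComponent.lift f (fun v w p _ => reach_lift_const f h v w ⟨p⟩)

@[simp] lemma ccLift_mk {V' : Type*} {β : Sort*} {G : SimpleGraph V'} (f : V' → β)
    (h : ∀ a b, G.Adj a b → f a = f b) (v : V') :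
    ccLift f h (G.connectedComponentMk v) = f v :=
  SimpleGraph.ConnectedComponent.lift_mk

def incHom (s : Finset ι) (p : ι) :
    interGraph σ s →g interGraph σ (insert p s) where
  toFun v := ⟨v.1, Finset.mem_insert_of_mem v.2⟩
  map_rel' := by
    rintro a b ⟨hne, hint⟩
    refine ⟨fun hh => hne (Subtype.ext (Subtype.mk_eq_mk.mp hh)), hint⟩

lemma compCount_singleton (i : ι) : compCount σ {i} = 1 := by
  have h1 : Subsingleton {x // x ∈ ({i} : Finset ι)} := ⟨by
    rintro ⟨a, ha⟩ ⟨b, hb⟩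
    simp only [Finset.mem_singleton] at ha hb
    subst ha; subst hb; rfl⟩
  have h2 : Subsingleton (interGraph σ {i}).ConnectedComponent := by
    constructor
    refine SimpleGraph.ConnectedComponent.ind fun v =>
      SimpleGraph.ConnectedComponent.ind fun w => ?_
    rw [Subsingleton.elim v w]
  have hne : Nonempty (interGraph σ {i}).ConnectedComponent :=
    ⟨(interGraph σ {i}).connectedComponentMk ⟨i, Finset.mem_singleton_self i⟩⟩
  exact Nat.card_unique

lemma compCount_insert_of_empty (s : Finset ι) (p : ι) (hp : p ∉ s)
    (hdisj : unionOver σ s ∩ σ p = ∅) :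
    compCount σ (insert p s) = compCount σ s + 1 := by
  classical
  have hkey : ∀ a : ι, a ∈ s → σ a ∩ σ p = ∅ := by
    intro a ha
    rw [Finset.eq_empty_iff_forall_notMem]
    intro x hx
    rw [Finset.eq_empty_iff_forall_notMem] at hdisj
    exact hdisj x (Finset.mem_inter.mpr ⟨Finset.mem_sup.mpr ⟨a, ha, (Finset.mem_inter.mp hx).1⟩,
      (Finset.mem_inter.mp hx).2⟩)
  have hval : ∀ v : {i // i ∈ insert p s}, v.1 ∉ s → v.1 = p := by
    intro v hv
    rcases Finset.mem_insert.mp v.2 with h | h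
    · exact h
    · exact absurd h hv
  have hcc : ∀ a b : {i // i ∈ insert p s}, (interGraph σ (insert p s)).Adj a b →
      (if h : a.1 ∈ s then some ((interGraph σ s).connectedComponentMk ⟨a.1, h⟩) else none)
      = (if h : b.1 ∈ s then some ((interGraph σ s).connectedComponentMk ⟨b.1, h⟩) else none) := by
    rintro a b ⟨hne, hint⟩
    by_cases ha : a.1 ∈ s <;> by_cases hb : b.1 ∈ s
    · rw [dif_pos ha, dif_pos hb]
      refine congrArg some (SimpleGraph.ConnectedComponent.sound
        (SimpleGraph.Adj.reachable ⟨?_, hint⟩))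
      exact fun hh => hne (Subtype.ext (Subtype.mk_eq_mk.mp hh))
    · exfalso
      have h1 := hkey a.1 ha
      rw [hval b hb] at hint
      exact Finset.not_nonempty_empty (h1 ▸ hint)
    · exfalso
      have h1 := hkey b.1 hb
      rw [hval a ha, Finset.inter_comm] at hint
      exact Finset.not_nonempty_empty (h1 ▸ hint)
    · exact absurd (Subtype.ext ((hval a ha).trans (hval b hb).symm)) hne
  have e : (interGraph σ (insert p s)).ConnectedComponent ≃
      Option (interGraph σ s).ConnectedComponent := by
    refine ⟨ccLift _ hcc,
      fun o => o.elim ((interGraph σ (insert p s)).connectedComponentMk ⟨p, Finset.mem_insert_self p s⟩)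
        (SimpleGraph.ConnectedComponent.map (incHom σ s p)), ?_, ?_⟩
    · refine SimpleGraph.ConnectedComponent.ind fun v => ?_
      rw [ccLift_mk]
      by_cases hv : v.1 ∈ s
      · rw [dif_pos hv]
        show SimpleGraph.ConnectedComponent.map (incHom σ s p) _ = _
        rw [SimpleGraph.ConnectedComponent.map_mk]
        rfl
      · rw [dif_neg hv]
        show (interGraph σ (insert p s)).connectedComponentMk ⟨p, _⟩ = _
        congr 1
        exact Subtype.ext (hval v hv).symm
    · rintro (_ | c)
      · show ccLift _ hcc ((interGraph σ (insert p s)).connectedComponentMk ⟨p, _⟩) = none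
        rw [ccLift_mk, dif_neg hp]
      · induction c using SimpleGraph.ConnectedComponent.ind with
        | _ a =>
          show ccLift _ hcc (SimpleGraph.ConnectedComponent.map (incHom σ s p) _) = _
          rw [SimpleGraph.ConnectedComponent.map_mk, ccLift_mk]
          show (if h : a.1 ∈ s then _ else none) = _
          rw [dif_pos a.2]
          rfl
  have hfin : Finite (interGraph σ s).ConnectedComponent := Quot.finite _
  letI : Fintype (interGraph σ s).ConnectedComponent := Fintype.ofFinite _
  rw [compCount, compCount, Nat.card_congr e]
  simp [Nat.card_eq_fintype_card]

lemma compCount_insert_of_conn (s : Finset ι) (p : ι) (hp : p ∉ s)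
    (i0 : ι) (hi0 : i0 ∈ s) (hi0p : (σ i0 ∩ σ p).Nonempty)
    (hcon : ∀ i (hi : i ∈ s) j (hj : j ∈ s), (σ i ∩ σ p).Nonempty → (σ j ∩ σ p).Nonempty →
      (interGraph σ s).Reachable ⟨i, hi⟩ ⟨j, hj⟩) :
    compCount σ (insert p s) = compCount σ s := by
  classical
  have hval : ∀ v : {i // i ∈ insert p s}, v.1 ∉ s → v.1 = p := by
    intro v hv
    rcases Finset.mem_insert.mp v.2 with h | h
    · exact h
    · exact absurd h hv
  have hcc : ∀ a b : {i // i ∈ insert p s}, (interGraph σ (insert p s)).Adj a b →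
      (interGraph σ s).connectedComponentMk (if h : a.1 ∈ s then ⟨a.1, h⟩ else ⟨i0, hi0⟩)
      = (interGraph σ s).connectedComponentMk (if h : b.1 ∈ s then ⟨b.1, h⟩ else ⟨i0, hi0⟩) := by
    rintro a b ⟨hne, hint⟩
    by_cases ha : a.1 ∈ s <;> by_cases hb : b.1 ∈ s
    · rw [dif_pos ha, dif_pos hb]
      refine SimpleGraph.ConnectedComponent.sound (SimpleGraph.Adj.reachable ⟨?_, hint⟩)
      exact fun hh => hne (Subtype.ext (Subtype.mk_eq_mk.mp hh))
    · rw [dif_pos ha, dif_neg hb]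
      refine SimpleGraph.ConnectedComponent.sound (hcon a.1 ha i0 hi0 ?_ hi0p)
      rw [hval b hb] at hint; exact hint
    · rw [dif_neg ha, dif_pos hb]
      refine SimpleGraph.ConnectedComponent.sound (hcon i0 hi0 b.1 hb hi0p ?_)
      rw [hval a ha, Finset.inter_comm] at hint; exact hint
    · exact absurd (Subtype.ext ((hval a ha).trans (hval b hb).symm)) hne
  have e : (interGraph σ (insert p s)).ConnectedComponent ≃
      (interGraph σ s).ConnectedComponent := by
    refine ⟨ccLift _ hcc, SimpleGraph.ConnectedComponent.map (incHom σ s p), ?_, ?_⟩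
    · refine SimpleGraph.ConnectedComponent.ind fun v => ?_
      rw [ccLift_mk]
      by_cases hv : v.1 ∈ s
      · rw [dif_pos hv, SimpleGraph.ConnectedComponent.map_mk]
        rfl
      · rw [dif_neg hv, SimpleGraph.ConnectedComponent.map_mk]
        refine SimpleGraph.ConnectedComponent.sound (SimpleGraph.Adj.reachable ⟨?_, ?_⟩)
        · intro hh
          have hvv : i0 = v.1 := Subtype.mk_eq_mk.mp hh
          exact hv (hvv ▸ hi0)
        · show (σ i0 ∩ σ v.1).Nonempty
          rw [hval v hv]
          exact hi0p
    · refine SimpleGraph.ConnectedComponent.ind fun a => ?_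
      rw [SimpleGraph.ConnectedComponent.map_mk, ccLift_mk]
      show (interGraph σ s).connectedComponentMk (if h : a.1 ∈ s then ⟨a.1, h⟩ else ⟨i0, hi0⟩) = _
      rw [dif_pos a.2]
  rw [compCount, compCount, Nat.card_congr e]

end Lemmas


section Part2
variable {ι V W : Type*} [DecidableEq ι] [DecidableEq V] [DecidableEq W]
  (σ : ι → Finset V) (α : ι → Finset W)

lemma reach_of_nbrs (h : PropertyI σ α) (s : Finset ι) (p : ι) (hp : p ∉ s)
    {i j : ι} (hi : i ∈ s) (hj : j ∈ s)
    (hip : (σ i ∩ σ p).Nonempty) (hjp : (σ j ∩ σ p).Nonempty) :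
    (interGraph σ s).Reachable ⟨i, hi⟩ ⟨j, hj⟩ := by
  classical
  by_contra hnr
  set G := interGraph σ s with hG
  let C1 : Finset ι := s.filter (fun a => ∃ ha : a ∈ s, G.Reachable ⟨i, hi⟩ ⟨a, ha⟩)
  let C2 : Finset ι := s.filter (fun a => ∃ ha : a ∈ s, G.Reachable ⟨j, hj⟩ ⟨a, ha⟩)
  have hC1s : C1 ⊆ s := Finset.filter_subset _ _
  have hC2s : C2 ⊆ s := Finset.filter_subset _ _
  have hiC1 : i ∈ C1 := Finset.mem_filter.mpr ⟨hi, hi, SimpleGraph.Reachable.refl _⟩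
  have hjC2 : j ∈ C2 := Finset.mem_filter.mpr ⟨hj, hj, SimpleGraph.Reachable.refl _⟩
  -- a ∈ C1, b ∈ C2 have disjoint σ's (else reachability would merge)
  have hnotC1 : ∀ b ∈ C2, b ∉ C1 := by
    intro b hb hbC1
    obtain ⟨hbs, hb1, hr1⟩ := Finset.mem_filter.mp hbC1
    obtain ⟨_, hb2, hr2⟩ := Finset.mem_filter.mp hb
    exact hnr (hr1.trans hr2.symm)
  have hclosed : ∀ a ∈ C1, ∀ b ∈ s, b ∉ C1 → σ a ∩ σ b = ∅ := by
    intro a ha b hb hbn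
    obtain ⟨has, ha', hra⟩ := Finset.mem_filter.mp ha
    by_contra hne
    have hnonempty : (σ a ∩ σ b).Nonempty := Finset.nonempty_iff_ne_empty.mpr hne
    have hab : a ≠ b := fun hh => hbn (hh ▸ ha)
    have hadj : G.Adj ⟨a, has⟩ ⟨b, hb⟩ :=
      ⟨fun hh => hab (Subtype.mk_eq_mk.mp hh), hnonempty⟩
    exact hbn (Finset.mem_filter.mpr ⟨hb, hb, hra.trans hadj.reachable⟩)
  -- σ-disjointness of C1 and each b ∈ C2
  have hsig : ∀ b ∈ C2, unionOver σ C1 ∩ σ b = ∅ := by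
    intro b hb
    rw [Finset.eq_empty_iff_forall_notMem]
    intro x hx
    obtain ⟨hx1, hx2⟩ := Finset.mem_inter.mp hx
    obtain ⟨a, ha, hxa⟩ := Finset.mem_sup.mp hx1
    have := hclosed a ha b (hC2s hb) (hnotC1 b hb)
    rw [Finset.eq_empty_iff_forall_notMem] at this
    exact this x (Finset.mem_inter.mpr ⟨hxa, hx2⟩)
  -- α-disjointness
  have hC1ne : C1.Nonempty := ⟨i, hiC1⟩
  have hC2ne : C2.Nonempty := ⟨j, hjC2⟩
  have halpha : ∀ b ∈ C2, unionOver α C1 ∩ α b = ∅ := by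
    intro b hb
    exact (h.2 C1 hC1ne b (hnotC1 b hb)).1 (hsig b hb)
  have halphaU : unionOver α C1 ∩ unionOver α C2 = ∅ := by
    rw [Finset.eq_empty_iff_forall_notMem]
    intro x hx
    obtain ⟨hx1, hx2⟩ := Finset.mem_inter.mp hx
    obtain ⟨b, hb, hxb⟩ := Finset.mem_sup.mp hx2
    have := halpha b hb
    rw [Finset.eq_empty_iff_forall_notMem] at this
    exact this x (Finset.mem_inter.mpr ⟨hx1, hxb⟩)
  have hsigU : unionOver σ C1 ∩ unionOver σ C2 = ∅ := by
    rw [Finset.eq_empty_iff_forall_notMem]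
    intro x hx
    obtain ⟨hx1, hx2⟩ := Finset.mem_inter.mp hx
    obtain ⟨b, hb, hxb⟩ := Finset.mem_sup.mp hx2
    have := hsig b hb
    rw [Finset.eq_empty_iff_forall_notMem] at this
    exact this x (Finset.mem_inter.mpr ⟨hx1, hxb⟩)
  -- p not in C1, C2, C1 ∪ C2
  have hpC1 : p ∉ C1 := fun hh => hp (hC1s hh)
  have hpC2 : p ∉ C2 := fun hh => hp (hC2s hh)
  have hpC12 : p ∉ C1 ∪ C2 := by
    rw [Finset.mem_union]; rintro (hh | hh)
    exacts [hpC1 hh, hpC2 hh]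
  -- nonemptiness of σ_{C1} ∩ σ_p and σ_{C2} ∩ σ_p
  have h1p : (unionOver σ C1 ∩ σ p).Nonempty := by
    obtain ⟨x, hx⟩ := hip
    obtain ⟨hx1, hx2⟩ := Finset.mem_inter.mp hx
    exact ⟨x, Finset.mem_inter.mpr ⟨Finset.mem_sup.mpr ⟨i, hiC1, hx1⟩, hx2⟩⟩
  have h2p : (unionOver σ C2 ∩ σ p).Nonempty := by
    obtain ⟨x, hx⟩ := hjp
    obtain ⟨hx1, hx2⟩ := Finset.mem_inter.mp hx
    exact ⟨x, Finset.mem_inter.mpr ⟨Finset.mem_sup.mpr ⟨j, hjC2, hx1⟩, hx2⟩⟩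
  have h12p : (unionOver σ (C1 ∪ C2) ∩ σ p).Nonempty := by
    obtain ⟨x, hx⟩ := h1p
    obtain ⟨hx1, hx2⟩ := Finset.mem_inter.mp hx
    obtain ⟨a, ha, hxa⟩ := Finset.mem_sup.mp hx1
    exact ⟨x, Finset.mem_inter.mpr ⟨Finset.mem_sup.mpr
      ⟨a, Finset.mem_union_left _ ha, hxa⟩, hx2⟩⟩
  have eq1 := (h.2 C1 hC1ne p hpC1).2 h1p
  have eq2 := (h.2 C2 hC2ne p hpC2).2 h2p
  have eq3 := (h.2 (C1 ∪ C2) (hC1ne.mono Finset.subset_union_left) p hpC12).2 h12p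
  -- expand unions
  have hexp : ∀ (X : ι → Finset W) , unionOver X (C1 ∪ C2) = unionOver X C1 ∪ unionOver X C2 := by
    intro X; rw [unionOver, unionOver, unionOver, Finset.sup_union]; rfl
  have hexpσ : unionOver σ (C1 ∪ C2) = unionOver σ C1 ∪ unionOver σ C2 := by
    rw [unionOver, unionOver, unionOver, Finset.sup_union]; rfl
  have hcardσ : (unionOver σ (C1 ∪ C2) ∩ σ p).card
      = (unionOver σ C1 ∩ σ p).card + (unionOver σ C2 ∩ σ p).card := by
    rw [hexpσ, Finset.union_inter_distrib_right]
    rw [Finset.card_union_of_disjoint]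
    rw [Finset.disjoint_left]
    intro x hx1 hx2
    have hh1 := (Finset.mem_inter.mp hx1).1
    have hh2 := (Finset.mem_inter.mp hx2).1
    rw [Finset.eq_empty_iff_forall_notMem] at hsigU
    exact hsigU x (Finset.mem_inter.mpr ⟨hh1, hh2⟩)
  have hcardα : (unionOver α (C1 ∪ C2) ∩ α p).card
      = (unionOver α C1 ∩ α p).card + (unionOver α C2 ∩ α p).card := by
    rw [hexp α, Finset.union_inter_distrib_right]
    rw [Finset.card_union_of_disjoint]
    rw [Finset.disjoint_left]
    intro x hx1 hx2
    have hh1 := (Finset.mem_inter.mp hx1).1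
    have hh2 := (Finset.mem_inter.mp hx2).1
    rw [Finset.eq_empty_iff_forall_notMem] at halphaU
    exact halphaU x (Finset.mem_inter.mpr ⟨hh1, hh2⟩)
  omega

end Part2


section Part3
variable {ι V W : Type*} [DecidableEq ι] [DecidableEq V] [DecidableEq W]
  (σ : ι → Finset V) (α : ι → Finset W)

lemma card_key (h : PropertyI σ α) {I : Finset ι} (hI : I.Nonempty) :
    (unionOver α I).card + compCount σ I = (unionOver σ I).card := by
  classical
  induction hI using Finset.Nonempty.cons_induction with
  | singleton i =>
    rw [unionOver, unionOver, Finset.sup_singleton, Finset.sup_singleton,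
      compCount_singleton]
    exact h.1 i
  | cons p s hp hs ih =>
    rw [Finset.cons_eq_insert]
    have hσ : unionOver σ (insert p s) = σ p ∪ unionOver σ s := by
      rw [unionOver, unionOver, Finset.sup_insert]; rfl
    have hα : unionOver α (insert p s) = α p ∪ unionOver α s := by
      rw [unionOver, unionOver, Finset.sup_insert]; rfl
    rcases Finset.eq_empty_or_nonempty (unionOver σ s ∩ σ p) with hsp | hsp
    · have hαdisj := (h.2 s hs p hp).1 hsp
      have hcc := compCount_insert_of_empty σ s p hp hsp
      have hcσ : (σ p ∪ unionOver σ s).card = (σ p).card + (unionOver σ s).card := by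
        apply Finset.card_union_of_disjoint
        rw [Finset.disjoint_right]
        intro x hx1 hx2
        rw [Finset.eq_empty_iff_forall_notMem] at hsp
        exact hsp x (Finset.mem_inter.mpr ⟨hx1, hx2⟩)
      have hcα : (α p ∪ unionOver α s).card = (α p).card + (unionOver α s).card := by
        apply Finset.card_union_of_disjoint
        rw [Finset.disjoint_right]
        intro x hx1 hx2
        rw [Finset.eq_empty_iff_forall_notMem] at hαdisj
        exact hαdisj x (Finset.mem_inter.mpr ⟨hx1, hx2⟩)
      have hp1 := h.1 p
      rw [hσ, hα, hcc, hcσ, hcα]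
      omega
    · have eqc := (h.2 s hs p hp).2 hsp
      obtain ⟨x, hx⟩ := hsp
      obtain ⟨hx1, hx2⟩ := Finset.mem_inter.mp hx
      obtain ⟨i0, hi0, hxi0⟩ := Finset.mem_sup.mp hx1
      have hi0p : (σ i0 ∩ σ p).Nonempty := ⟨x, Finset.mem_inter.mpr ⟨hxi0, hx2⟩⟩
      have hcc := compCount_insert_of_conn σ s p hp i0 hi0 hi0p
        (fun i hi j hj hip hjp => reach_of_nbrs σ α h s p hp hi hj hip hjp)
      have hcσ := Finset.card_union_add_card_inter (σ p) (unionOver σ s)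
      have hcα := Finset.card_union_add_card_inter (α p) (unionOver α s)
      have hic : (σ p ∩ unionOver σ s).card = (unionOver σ s ∩ σ p).card := by
        rw [Finset.inter_comm]
      have hicα : (α p ∩ unionOver α s).card = (unionOver α s ∩ α p).card := by
        rw [Finset.inter_comm]
      have hp1 := h.1 p
      rw [hσ, hα, hcc]
      omega

end Part3

/-- under property I,
`χ_c(S)(t) = t^n · Σ_{I ⊆ [r]} (−1)^{|I|} t^{−|α_I|}` in `ℤ[t,t⁻¹]`. -/
theorem stmt_1 {n r : ℕ} {W : Type*} [DecidableEq W]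
    (σ : Fin r → Finset (Fin n)) (α : Fin r → Finset W)
    (h : PropertyI σ α) :
    simpChrom σ =
      T (n : ℤ) *
        ∑ I ∈ (univ : Finset (Fin r)).powerset,
          (-1) ^ I.card * T (-((unionOver α I).card : ℤ)) := by
  classical
  have hsplit : (univ : Finset (Fin r)).powerset
      = insert ∅ ((univ : Finset (Fin r)).powerset.filter (fun I => I.Nonempty)) := by
    ext I
    simp only [Finset.mem_insert, Finset.mem_filter, Finset.mem_powerset, Finset.subset_univ,
      true_and]
    constructor
    · intro _
      rcases Finset.eq_empty_or_nonempty I with hI | hI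
      · exact Or.inl hI
      · exact Or.inr hI
    · intro _; trivial
  have hnotmem : (∅ : Finset (Fin r)) ∉
      (univ : Finset (Fin r)).powerset.filter (fun I => I.Nonempty) := by
    simp
  rw [hsplit, Finset.sum_insert hnotmem]
  have hempty : ((-1 : LaurentPolynomial ℤ)) ^ (∅ : Finset (Fin r)).card
      * T (-((unionOver α (∅ : Finset (Fin r))).card : ℤ)) = 1 := by
    rw [unionOver, Finset.sup_empty]
    simp [T_zero]
  rw [hempty, mul_add, mul_one, Finset.mul_sum, simpChrom]
  congr 1
  apply Finset.sum_congr rfl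
  intro I hI
  obtain ⟨_, hIne⟩ := Finset.mem_filter.mp hI
  have hkey := card_key σ α h hIne
  have hexp : (n : ℤ) - ((unionOver σ I).card : ℤ) + (compCount σ I : ℤ)
      = (n : ℤ) + (-((unionOver α I).card : ℤ)) := by
    have : ((unionOver α I).card : ℤ) + (compCount σ I : ℤ) = ((unionOver σ I).card : ℤ) := by
      exact_mod_cast congrArg (Nat.cast : ℕ → ℤ) hkey
    linarith
  rw [hexp, T_add]
  ring
end

section
/- Suppose σ_1, …, σ_r satisfy property I with witnesses α_1, …, α_r ⊆ {1,…,N}. Then χ_c(S)(t) = t^n · Σ_{F ∈ T(S)} t^{−|F|} (1 − t^{−1})^{N−|F|} in ℤ[t,t⁻¹]. In particular, the simplicial chromatic polynomial χ_c(S) is entirely determined by n, N, and the face numbers (equivalently, the h-vector) of the auxiliary simplicial complex T(S). -/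
open Finset LaurentPolynomial

set_option linter.unusedSectionVars false
set_option linter.unusedVariables false

section Rel
variable {ι V : Type*} [DecidableEq ι] [DecidableEq V] (σ : ι → Finset V)

/-- edge relation restricted to `I`. -/
def baseRel (I : Finset ι) (i j : ι) : Prop :=
  i ∈ I ∧ j ∈ I ∧ i ≠ j ∧ (σ i ∩ σ j).Nonempty

/-- reachability within `I`. -/
def sRel (I : Finset ι) : ι → ι → Prop := Relation.ReflTransGen (baseRel σ I)

variable {σ}

lemma baseRel_symm {I : Finset ι} {i j : ι} (h : baseRel σ I i j) : baseRel σ I j i :=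
  ⟨h.2.1, h.1, h.2.2.1.symm, by rw [Finset.inter_comm]; exact h.2.2.2⟩

lemma sRel_refl {I : Finset ι} (i : ι) : sRel σ I i i := Relation.ReflTransGen.refl

lemma sRel_trans {I : Finset ι} {i j k : ι} (h1 : sRel σ I i j) (h2 : sRel σ I j k) :
    sRel σ I i k := Relation.ReflTransGen.trans h1 h2

lemma sRel_symm {I : Finset ι} {i j : ι} (h : sRel σ I i j) : sRel σ I j i :=
  by haveI : Std.Symm (baseRel σ I) := ⟨fun _ _ => baseRel_symm⟩; exact Std.Symm.symm (r := Relation.ReflTransGen (baseRel σ I)) _ _ h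

lemma sRel_mono {I J : Finset ι} (hIJ : I ⊆ J) {i j : ι} (h : sRel σ I i j) :
    sRel σ J i j := by
  refine Relation.ReflTransGen.mono ?_ _ _ h
  exact fun a b ⟨ha, hb, hne, hint⟩ => ⟨hIJ ha, hIJ hb, hne, hint⟩

lemma sRel_restrict {I J : Finset ι} (hJI : J ⊆ I)
    (hclosed : ∀ x y, x ∈ J → baseRel σ I x y → y ∈ J) {a b : ι}
    (ha : a ∈ J) (hab : sRel σ I a b) : sRel σ J a b ∧ b ∈ J := by
  induction hab with
  | refl => exact ⟨sRel_refl a, ha⟩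
  | tail h1 h2 ih =>
    obtain ⟨hs, hbJ⟩ := ih
    have hcJ := hclosed _ _ hbJ h2
    exact ⟨hs.tail ⟨hbJ, hcJ, h2.2.2.1, h2.2.2.2⟩, hcJ⟩

end Rel

set_option linter.unusedSectionVars false in
example : True := trivial
set_option linter.unusedSectionVars false
set_option linter.unusedVariables false

/-- The component of `i` within `I`. -/
noncomputable def classOf {ι V : Type*} [DecidableEq ι] [DecidableEq V]
    (σ : ι → Finset V) (I : Finset ι) (i : ι) : Finset ι :=
  @Finset.filter _ (fun j => sRel σ I i j) (Classical.decPred _) I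

/-- The number of components. -/
noncomputable def ccount {ι V : Type*} [DecidableEq ι] [DecidableEq V]
    (σ : ι → Finset V) (I : Finset ι) : ℕ :=
  (I.image (classOf σ I)).card

section ClassOf
variable {ι V : Type*} [DecidableEq ι] [DecidableEq V] {σ : ι → Finset V} {I : Finset ι}

lemma mem_classOf {i j : ι} : j ∈ classOf σ I i ↔ j ∈ I ∧ sRel σ I i j := by
  unfold classOf; exact @Finset.mem_filter _ _ (Classical.decPred _) _ _

lemma self_mem_classOf {i : ι} (hi : i ∈ I) : i ∈ classOf σ I i :=
  mem_classOf.2 ⟨hi, sRel_refl i⟩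

lemma classOf_subset {i : ι} : classOf σ I i ⊆ I := fun j hj => (mem_classOf.1 hj).1

lemma classOf_eq_of_sRel {i j : ι} (h : sRel σ I i j) : classOf σ I i = classOf σ I j := by
  ext k
  simp only [mem_classOf]
  exact ⟨fun ⟨hk, hik⟩ => ⟨hk, sRel_trans (sRel_symm h) hik⟩,
    fun ⟨hk, hjk⟩ => ⟨hk, sRel_trans h hjk⟩⟩

lemma classOf_closed {i x y : ι} (hx : x ∈ classOf σ I i) (hxy : baseRel σ I x y) :
    y ∈ classOf σ I i :=
  mem_classOf.2 ⟨hxy.2.1, sRel_trans (mem_classOf.1 hx).2 (Relation.ReflTransGen.single hxy)⟩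

/-- components of a class are computed within the class -/
lemma sRel_classOf_iff {i a b : ι} (hi : i ∈ I) (ha : a ∈ classOf σ I i) :
    sRel σ I a b ↔ sRel σ (classOf σ I i) a b :=
  ⟨fun h => (sRel_restrict classOf_subset (fun _ _ => classOf_closed) ha h).1,
   fun h => sRel_mono classOf_subset h⟩

lemma sdiff_classOf_closed {i x y : ι} (hx : x ∈ I \ classOf σ I i)
    (hxy : baseRel σ I x y) : y ∈ I \ classOf σ I i := by
  rw [Finset.mem_sdiff] at hx ⊢
  refine ⟨hxy.2.1, fun hy => hx.2 ?_⟩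
  exact classOf_closed hy (baseRel_symm hxy)

lemma sRel_sdiff_iff {i a b : ι} (ha : a ∈ I \ classOf σ I i) :
    sRel σ I a b ↔ sRel σ (I \ classOf σ I i) a b :=
  ⟨fun h => (sRel_restrict (Finset.sdiff_subset) (fun _ _ => sdiff_classOf_closed) ha h).1,
   fun h => sRel_mono (Finset.sdiff_subset) h⟩

end ClassOf

section CCount
variable {ι V : Type*} [DecidableEq ι] [DecidableEq V] {σ : ι → Finset V} {I : Finset ι}

lemma ccount_singleton (p : ι) : ccount σ {p} = 1 := by
  unfold ccount
  rw [Finset.image_singleton, Finset.card_singleton]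

lemma ccount_connected (hne : I.Nonempty)
    (hconn : ∀ i ∈ I, ∀ j ∈ I, sRel σ I i j) : ccount σ I = 1 := by
  obtain ⟨i0, hi0⟩ := hne
  unfold ccount
  have : I.image (classOf σ I) = {classOf σ I i0} := by
    ext x
    simp only [Finset.mem_image, Finset.mem_singleton]
    constructor
    · rintro ⟨a, ha, rfl⟩
      exact (classOf_eq_of_sRel (hconn i0 hi0 a ha)).symm
    · rintro rfl
      exact ⟨i0, hi0, rfl⟩
  rw [this, Finset.card_singleton]

lemma classOf_eq_classOf_classOf {i0 : ι} (hi0 : i0 ∈ I) {a : ι}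
    (ha : a ∈ classOf σ I i0) : classOf σ I a = classOf σ (classOf σ I i0) a := by
  ext j
  constructor
  · intro hj
    obtain ⟨hjI, hs⟩ := mem_classOf.1 hj
    obtain ⟨h1, h2⟩ := sRel_restrict (classOf_subset (I := I) (i := i0))
      (fun _ _ => classOf_closed) ha hs
    exact mem_classOf.2 ⟨h2, h1⟩
  · intro hj
    obtain ⟨hjC, hs⟩ := mem_classOf.1 hj
    exact mem_classOf.2 ⟨classOf_subset hjC, sRel_mono classOf_subset hs⟩

lemma classOf_eq_classOf_sdiff {i0 : ι} {a : ι}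
    (ha : a ∈ I \ classOf σ I i0) : classOf σ I a = classOf σ (I \ classOf σ I i0) a := by
  ext j
  constructor
  · intro hj
    obtain ⟨hjI, hs⟩ := mem_classOf.1 hj
    obtain ⟨h1, h2⟩ := sRel_restrict (Finset.sdiff_subset (s := I) (t := classOf σ I i0))
      (fun _ _ => sdiff_classOf_closed) ha hs
    exact mem_classOf.2 ⟨h2, h1⟩
  · intro hj
    obtain ⟨hjD, hs⟩ := mem_classOf.1 hj
    exact mem_classOf.2 ⟨(Finset.mem_sdiff.1 hjD).1, sRel_mono Finset.sdiff_subset hs⟩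

lemma ccount_split {i0 : ι} (hi0 : i0 ∈ I) :
    ccount σ I = ccount σ (classOf σ I i0) + ccount σ (I \ classOf σ I i0) := by
  set C := classOf σ I i0 with hC
  set D := I \ C with hD
  have hunion : I = C ∪ D := (Finset.union_sdiff_of_subset classOf_subset).symm
  have himg : I.image (classOf σ I) = C.image (classOf σ C) ∪ D.image (classOf σ D) := by
    have h0 : I.image (classOf σ I) = C.image (classOf σ I) ∪ D.image (classOf σ I) := by
      rw [← Finset.image_union, ← hunion]
    rw [h0]
    congr 1
    · exact Finset.image_congr (fun a ha => classOf_eq_classOf_classOf hi0 ha)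
    · exact Finset.image_congr (fun a ha => classOf_eq_classOf_sdiff ha)
  have hdisj : Disjoint (C.image (classOf σ C)) (D.image (classOf σ D)) := by
    rw [Finset.disjoint_left]
    rintro x hx hy
    obtain ⟨a, ha, rfl⟩ := Finset.mem_image.1 hx
    obtain ⟨b, hb, hba⟩ := Finset.mem_image.1 hy
    have haC : a ∈ classOf σ C a := self_mem_classOf ha
    rw [← hba] at haC
    have : a ∈ D := classOf_subset haC
    exact (Finset.mem_sdiff.1 this).2 ha
  unfold ccount
  rw [himg, Finset.card_union_of_disjoint hdisj]

lemma interGraph_reachable_iff {u v : {i // i ∈ I}} :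
    (interGraph σ I).Reachable u v ↔ sRel σ I u.1 v.1 := by
  constructor
  · intro h
    rw [SimpleGraph.reachable_iff_reflTransGen] at h
    refine Relation.ReflTransGen.lift (p := baseRel σ I) Subtype.val ?_ _ _ h
    rintro ⟨a, haI⟩ ⟨b, hbI⟩ ⟨hne, hint⟩
    exact ⟨haI, hbI, fun hab => hne (Subtype.ext hab), hint⟩
  · intro h
    have : ∀ {a b : ι}, sRel σ I a b → ∀ (ha : a ∈ I) (hb : b ∈ I),
        (interGraph σ I).Reachable ⟨a, ha⟩ ⟨b, hb⟩ := by
      intro a b h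
      induction h with
      | refl => intro ha hb; rfl
      | tail h1 h2 ih =>
        intro ha hc
        have hb := h2.1
        refine (ih ha hb).trans (SimpleGraph.Adj.reachable ?_)
        exact ⟨fun he => h2.2.2.1 (congrArg Subtype.val he), h2.2.2.2⟩
    exact this h u.2 v.2

lemma compCount_eq_ccount : compCount σ I = ccount σ I := by
  classical
  have key : ∀ (v w : {i // i ∈ I}) (p : (interGraph σ I).Walk v w), p.IsPath →
      (⟨classOf σ I v.1, Finset.mem_image_of_mem _ v.2⟩ :
        {x // x ∈ I.image (classOf σ I)}) = ⟨classOf σ I w.1, Finset.mem_image_of_mem _ w.2⟩ := by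
    intro v w p _
    exact Subtype.ext (classOf_eq_of_sRel (interGraph_reachable_iff.1 ⟨p⟩))
  let φ : (interGraph σ I).ConnectedComponent → {x // x ∈ I.image (classOf σ I)} :=
    SimpleGraph.ConnectedComponent.lift _ key
  have hbij : Function.Bijective φ := by
    constructor
    · intro c d
      refine SimpleGraph.ConnectedComponent.ind₂ (fun v w h => ?_) c d
      have heq : classOf σ I v.1 = classOf σ I w.1 := congrArg Subtype.val h
      have hw : w.1 ∈ classOf σ I v.1 := heq ▸ self_mem_classOf w.2
      exact SimpleGraph.ConnectedComponent.sound
        (interGraph_reachable_iff.2 (mem_classOf.1 hw).2)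
    · rintro ⟨x, hx⟩
      obtain ⟨a, ha, rfl⟩ := Finset.mem_image.1 hx
      exact ⟨(interGraph σ I).connectedComponentMk ⟨a, ha⟩, rfl⟩
  unfold compCount
  rw [Nat.card_eq_of_bijective φ hbij, Nat.card_eq_finsetCard]
  rfl

end CCount

section Key
variable {ι V W : Type*} [DecidableEq ι] [DecidableEq V] [DecidableEq W]
  {σ : ι → Finset V} {α : ι → Finset W}

lemma mem_unionOver {I : Finset ι} {x : V} :
    x ∈ unionOver σ I ↔ ∃ i ∈ I, x ∈ σ i := by
  simp [unionOver, Finset.mem_sup]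

lemma sigma_subset_unionOver {I : Finset ι} {i : ι} (hi : i ∈ I) : σ i ⊆ unionOver σ I :=
  fun x hx => mem_unionOver.2 ⟨i, hi, hx⟩

lemma exists_bridge {I A : Finset ι} (hA : A ⊆ I)
    (hconn : ∀ i ∈ I, ∀ j ∈ I, sRel σ I i j) (hAne : A.Nonempty)
    (hne : (I \ A).Nonempty) : ∃ p ∈ I \ A, (unionOver σ A ∩ σ p).Nonempty := by
  obtain ⟨a, ha⟩ := hAne
  obtain ⟨q, hq⟩ := hne
  rw [Finset.mem_sdiff] at hq
  have hr : sRel σ I a q := hconn a (hA ha) q hq.1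
  have main : ∀ b, sRel σ I a b → b ∉ A → ∃ p ∈ I \ A, (unionOver σ A ∩ σ p).Nonempty := by
    intro b hb
    induction hb with
    | refl => intro hcon; exact absurd ha hcon
    | tail h1 h2 ih =>
      intro hc
      rename_i b' c'
      by_cases hbA : b' ∈ A
      · refine ⟨c', Finset.mem_sdiff.2 ⟨h2.2.1, hc⟩, ?_⟩
        obtain ⟨x, hx⟩ := h2.2.2.2
        rw [Finset.mem_inter] at hx
        exact ⟨x, Finset.mem_inter.2 ⟨sigma_subset_unionOver hbA hx.1, hx.2⟩⟩
      · exact ih hbA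
  exact main q hr hq.2

lemma buildup (h : PropertyI σ α) {I : Finset ι}
    (hconn : ∀ i ∈ I, ∀ j ∈ I, sRel σ I i j) :
    ∀ (n : ℕ) (A : Finset ι), A ⊆ I → A.Nonempty → (I \ A).card ≤ n →
      (unionOver α A).card + 1 = (unionOver σ A).card →
      (unionOver α I).card + 1 = (unionOver σ I).card := by
  intro n
  induction n with
  | zero =>
    intro A hAI hAne hcard hbase
    have : I \ A = ∅ := Finset.card_eq_zero.1 (Nat.le_zero.1 hcard)
    have hIA : I = A := Finset.Subset.antisymm (Finset.sdiff_eq_empty_iff_subset.1 this) hAI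
    rwa [hIA]
  | succ n ih =>
    intro A hAI hAne hcard hbase
    by_cases hIA : I = A
    · rwa [hIA]
    · have hne : (I \ A).Nonempty := by
        rw [Finset.sdiff_nonempty]
        intro hsub
        exact hIA (hsub.antisymm hAI)
      obtain ⟨p, hpD, hint⟩ := exists_bridge hAI hconn hAne hne
      rw [Finset.mem_sdiff] at hpD
      obtain ⟨hpI, hpA⟩ := hpD
      have hprop := (h.2 A hAne p hpA).2 hint
      -- cards of insert
      have hαins : unionOver α (insert p A) = α p ∪ unionOver α A := by
        simp [unionOver, Finset.sup_insert]
      have hσins : unionOver σ (insert p A) = σ p ∪ unionOver σ A := by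
        simp [unionOver, Finset.sup_insert]
      have hcα := Finset.card_union_add_card_inter (α p) (unionOver α A)
      have hcσ := Finset.card_union_add_card_inter (σ p) (unionOver σ A)
      rw [Finset.inter_comm] at hcα hcσ
      have h1 := h.1 p
      have hnext : (unionOver α (insert p A)).card + 1 = (unionOver σ (insert p A)).card := by
        rw [hαins, hσins]
        omega
      refine ih (insert p A) (Finset.insert_subset hpI hAI) (Finset.insert_nonempty p A) ?_ hnext
      have hsub : I \ insert p A ⊆ (I \ A).erase p := by
        intro x hx
        rw [Finset.mem_sdiff, Finset.mem_insert] at hx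
        push_neg at hx
        rw [Finset.mem_erase, Finset.mem_sdiff]
        exact ⟨hx.2.1, hx.1, hx.2.2⟩
      have := Finset.card_le_card hsub
      have := Finset.card_erase_of_mem (Finset.mem_sdiff.2 ⟨hpI, hpA⟩)
      omega

lemma key_lemma (h : PropertyI σ α) :
    ∀ (n : ℕ) (I : Finset ι), I.card ≤ n → I.Nonempty →
      (unionOver α I).card + ccount σ I = (unionOver σ I).card := by
  intro n
  induction n with
  | zero =>
    intro I hcard hne
    exact absurd (Finset.card_pos.2 hne) (by omega)
  | succ n ih =>
    intro I hcard hne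
    by_cases hconn : ∀ i ∈ I, ∀ j ∈ I, sRel σ I i j
    · rw [ccount_connected hne hconn]
      obtain ⟨i0, hi0⟩ := hne
      have hbase : (unionOver α ({i0} : Finset ι)).card + 1 =
          (unionOver σ ({i0} : Finset ι)).card := by
        simp only [unionOver, Finset.sup_singleton]
        exact h.1 i0
      exact buildup h hconn I.card {i0} (Finset.singleton_subset_iff.2 hi0) (Finset.singleton_nonempty i0)
        (Finset.card_le_card Finset.sdiff_subset) hbase
    · push_neg at hconn
      obtain ⟨i0, hi0, j0, hj0, hnrel⟩ := hconn
      set C := classOf σ I i0 with hCdef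
      set D := I \ C with hDdef
      have hCsub : C ⊆ I := classOf_subset
      have hCne : C.Nonempty := ⟨i0, self_mem_classOf hi0⟩
      have hj0D : j0 ∈ D := by
        rw [hDdef, Finset.mem_sdiff]
        exact ⟨hj0, fun hj => hnrel (mem_classOf.1 hj).2⟩
      have hDne : D.Nonempty := ⟨j0, hj0D⟩
      have hi0D : i0 ∉ D := by
        rw [hDdef, Finset.mem_sdiff]
        push_neg
        intro _; exact self_mem_classOf hi0
      have hunion : I = C ∪ D := (Finset.union_sdiff_of_subset hCsub).symm
      -- σ-disjointness
      have hσdisj : unionOver σ C ∩ unionOver σ D = ∅ := by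
        rw [Finset.eq_empty_iff_forall_notMem]
        intro x hx
        rw [Finset.mem_inter] at hx
        obtain ⟨c, hc, hxc⟩ := mem_unionOver.1 hx.1
        obtain ⟨d, hd, hxd⟩ := mem_unionOver.1 hx.2
        have hdD := hd
        rw [hDdef, Finset.mem_sdiff] at hdD
        have hcd : c ≠ d := fun he => hdD.2 (he ▸ hc)
        have hbr : baseRel σ I c d :=
          ⟨hCsub hc, hdD.1, hcd, ⟨x, Finset.mem_inter.2 ⟨hxc, hxd⟩⟩⟩
        have : d ∈ C := classOf_closed hc hbr
        exact hdD.2 this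
      have hσdisjp : ∀ p ∈ D, unionOver σ C ∩ σ p = ∅ := by
        intro p hp
        rw [Finset.eq_empty_iff_forall_notMem]
        intro x hx
        rw [Finset.mem_inter] at hx
        have : x ∈ unionOver σ C ∩ unionOver σ D :=
          Finset.mem_inter.2 ⟨hx.1, sigma_subset_unionOver hp hx.2⟩
        rw [hσdisj] at this
        exact absurd this (Finset.notMem_empty x)
      have hαdisj : unionOver α C ∩ unionOver α D = ∅ := by
        rw [Finset.eq_empty_iff_forall_notMem]
        intro x hx
        rw [Finset.mem_inter] at hx
        obtain ⟨p, hp, hxp⟩ := mem_unionOver.1 hx.2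
        have hpC : p ∉ C := (Finset.mem_sdiff.1 hp).2
        have := (h.2 C hCne p hpC).1 (hσdisjp p hp)
        have : x ∈ (∅ : Finset W) := this ▸ Finset.mem_inter.2 ⟨hx.1, hxp⟩
        exact absurd this (Finset.notMem_empty x)
      -- unions and cards
      have huσ : unionOver σ I = unionOver σ C ∪ unionOver σ D := by
        rw [hunion]; simp [unionOver, Finset.sup_union]
      have huα : unionOver α I = unionOver α C ∪ unionOver α D := by
        rw [hunion]; simp [unionOver, Finset.sup_union]
      have hcσ := Finset.card_union_add_card_inter (unionOver σ C) (unionOver σ D)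
      have hcα := Finset.card_union_add_card_inter (unionOver α C) (unionOver α D)
      rw [hσdisj, Finset.card_empty] at hcσ
      rw [hαdisj, Finset.card_empty] at hcα
      have hsplit : ccount σ I = ccount σ C + ccount σ D := ccount_split hi0
      -- IH
      have hCcard : C.card < I.card :=
        Finset.card_lt_card ⟨hCsub, fun hs => (Finset.mem_sdiff.1 hj0D).2 (hs hj0)⟩
      have hDcard : D.card < I.card :=
        Finset.card_lt_card ⟨Finset.sdiff_subset, fun hs => hi0D (hs hi0)⟩
      have ihC := ih C (by omega) hCne
      have ihD := ih D (by omega) hDne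
      rw [huσ, huα, hsplit]
      omega

lemma key_final (h : PropertyI σ α) {I : Finset ι} (hne : I.Nonempty) :
    (unionOver α I).card + compCount σ I = (unionOver σ I).card := by
  rw [compCount_eq_ccount]
  exact key_lemma h I.card I le_rfl hne

end Key

section Poly
open LaurentPolynomial

lemma sum_powerset_pow {R : Type*} [CommRing R] {β : Type*} [DecidableEq β]
    (s : Finset β) (x y : R) :
    ∑ G ∈ s.powerset, x ^ G.card * y ^ (s.card - G.card) = (x + y) ^ s.card := by
  rw [← Finset.prod_const (b := x + y), Finset.prod_add]
  refine Finset.sum_congr rfl (fun t ht => ?_)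
  rw [Finset.prod_const, Finset.prod_const,
    Finset.card_sdiff_of_subset (Finset.mem_powerset.1 ht)]

lemma sum_supset {N : ℕ} (A : Finset (Fin N)) :
    ∑ F ∈ Finset.univ.filter (fun F => A ⊆ F),
      (T (-(F.card : ℤ)) * (1 - T (-1)) ^ (N - F.card) : LaurentPolynomial ℤ) =
      T (-(A.card : ℤ)) := by
  classical
  have hbij :
      ∑ F ∈ Finset.univ.filter (fun F => A ⊆ F),
        (T (-(F.card : ℤ)) * (1 - T (-1)) ^ (N - F.card) : LaurentPolynomial ℤ) =
      ∑ G ∈ Aᶜ.powerset,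
        (T (-((A ∪ G).card : ℤ)) * (1 - T (-1)) ^ (N - (A ∪ G).card) : LaurentPolynomial ℤ) := by
    refine Finset.sum_bij' (fun F _ => F \ A) (fun G _ => A ∪ G) ?_ ?_ ?_ ?_ ?_
    · intro F hF
      rw [Finset.mem_powerset]
      intro x hx
      rw [Finset.mem_sdiff] at hx
      simp [Finset.mem_compl, hx.2]
    · intro G hG
      simp [Finset.mem_filter, Finset.subset_union_left]
    · intro F hF
      rw [Finset.mem_filter] at hF
      show A ∪ F \ A = F
      rw [Finset.union_sdiff_of_subset hF.2]
    · intro G hG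
      rw [Finset.mem_powerset] at hG
      show (A ∪ G) \ A = G
      have hdj : Disjoint A G := by
        rw [Finset.disjoint_left]
        intro x hx hxG
        exact (Finset.mem_compl.1 (hG hxG)) hx
      exact Finset.union_sdiff_cancel_left hdj
    · intro F hF
      rw [Finset.mem_filter] at hF
      rw [Finset.union_sdiff_of_subset hF.2]
  rw [hbij]
  have hN : Aᶜ.card = N - A.card := by
    rw [Finset.card_compl, Fintype.card_fin]
  have hterm : ∀ G ∈ Aᶜ.powerset,
      (T (-((A ∪ G).card : ℤ)) * (1 - T (-1)) ^ (N - (A ∪ G).card) : LaurentPolynomial ℤ) =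
      T (-(A.card : ℤ)) * (T (-1) ^ G.card * (1 - T (-1)) ^ (Aᶜ.card - G.card)) := by
    intro G hG
    rw [Finset.mem_powerset] at hG
    have hdisj : Disjoint A G := by
      rw [Finset.disjoint_left]
      intro x hx hxG
      exact (Finset.mem_compl.1 (hG hxG)) hx
    have hcard : (A ∪ G).card = A.card + G.card := Finset.card_union_of_disjoint hdisj
    have hle : A.card + G.card ≤ N := by
      rw [← hcard]
      exact (Finset.card_le_card (Finset.subset_univ _)).trans (by simp)
    have h2 : N - (A ∪ G).card = Aᶜ.card - G.card := by
      rw [hcard, hN]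
      omega
    rw [h2, hcard]
    have : (-((A.card : ℤ) + G.card)) = (-(A.card : ℤ)) + (-(G.card : ℤ)) := by ring
    rw [show (((A.card + G.card : ℕ) : ℤ)) = ((A.card : ℤ) + G.card) by push_cast; ring,
      this, T_add]
    rw [T_pow]
    rw [show ((G.card : ℕ) : ℤ) * (-1) = -(G.card : ℤ) by ring]
    ring
  rw [Finset.sum_congr rfl hterm, ← Finset.mul_sum, sum_powerset_pow]
  simp

lemma unionOver_subset_iff {ι W : Type*} [DecidableEq ι] [DecidableEq W] {α : ι → Finset W}
    {I : Finset ι} {F : Finset W} :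
    unionOver α I ⊆ F ↔ ∀ i ∈ I, α i ⊆ F := by
  constructor
  · intro h i hi x hx
    exact h (mem_unionOver.2 ⟨i, hi, hx⟩)
  · intro h x hx
    obtain ⟨i, hi, hxi⟩ := mem_unionOver.1 hx
    exact h i hi hxi

lemma faces_expand {r N : ℕ} (α : Fin r → Finset (Fin N))
    (w : Finset (Fin N) → LaurentPolynomial ℤ) :
    ∑ F ∈ facesOf α, w F =
      ∑ I ∈ (Finset.univ : Finset (Fin r)).powerset, (-1) ^ I.card *
        ∑ F ∈ Finset.univ.filter (fun F => unionOver α I ⊆ F), w F := by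
  classical
  have pointwise : ∀ F : Finset (Fin N),
      (if (∀ i, ¬ α i ⊆ F) then w F else 0) =
      ∑ I ∈ (Finset.univ : Finset (Fin r)).powerset, (-1) ^ I.card *
        (if unionOver α I ⊆ F then w F else 0) := by
    intro F
    set c : Fin r → LaurentPolynomial ℤ := fun i => if α i ⊆ F then (-1) else 0 with hc
    have hexp : ∏ i ∈ (Finset.univ : Finset (Fin r)), (c i + 1) =
        ∑ I ∈ (Finset.univ : Finset (Fin r)).powerset, ∏ i ∈ I, c i := by
      rw [Finset.prod_add]
      refine Finset.sum_congr rfl (fun I hI => ?_)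
      rw [Finset.prod_const_one, mul_one]
    have hleft : ∏ i ∈ (Finset.univ : Finset (Fin r)), (c i + 1) =
        (if (∀ i, ¬ α i ⊆ F) then 1 else 0) := by
      by_cases hall : ∀ i, ¬ α i ⊆ F
      · rw [if_pos hall]
        refine Finset.prod_eq_one (fun i _ => ?_)
        rw [hc]
        simp [hall i]
      · rw [if_neg hall]
        push_neg at hall
        obtain ⟨i, hi⟩ := hall
        refine Finset.prod_eq_zero (Finset.mem_univ i) ?_
        rw [hc]
        simp [hi]
    have hprodI : ∀ I : Finset (Fin r), ∏ i ∈ I, c i =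
        if unionOver α I ⊆ F then (-1) ^ I.card else 0 := by
      intro I
      by_cases hall : unionOver α I ⊆ F
      · rw [if_pos hall]
        rw [Finset.prod_congr rfl (fun i hi => ?_), Finset.prod_const]
        rw [hc]
        simp [unionOver_subset_iff.1 hall i hi]
      · rw [if_neg hall]
        rw [unionOver_subset_iff] at hall
        push_neg at hall
        obtain ⟨i, hiI, hi⟩ := hall
        refine Finset.prod_eq_zero hiI ?_
        rw [hc]
        simp [hi]
    calc (if (∀ i, ¬ α i ⊆ F) then w F else 0)
        = (if (∀ i, ¬ α i ⊆ F) then 1 else 0) * w F := by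
          by_cases hall : ∀ i, ¬ α i ⊆ F <;> simp [hall]
      _ = (∑ I ∈ (Finset.univ : Finset (Fin r)).powerset, ∏ i ∈ I, c i) * w F := by
          rw [← hexp, hleft]
      _ = ∑ I ∈ (Finset.univ : Finset (Fin r)).powerset, (∏ i ∈ I, c i) * w F := by
          rw [Finset.sum_mul]
      _ = _ := by
          refine Finset.sum_congr rfl (fun I _ => ?_)
          rw [hprodI]
          by_cases hI : unionOver α I ⊆ F <;> simp [hI]
  have pointwise' : ∀ F : Finset (Fin N),
      (@ite _ (∀ i, ¬ α i ⊆ F) Fintype.decidableForallFintype (w F) 0) =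
      ∑ I ∈ (Finset.univ : Finset (Fin r)).powerset, (-1) ^ I.card *
        (if unionOver α I ⊆ F then w F else 0) :=
    fun F => by
      rw [Subsingleton.elim (Fintype.decidableForallFintype :
        Decidable (∀ i, ¬ α i ⊆ F)) (by infer_instance)]
      exact pointwise F
  rw [facesOf, Finset.sum_filter]
  refine (Finset.sum_congr rfl fun F _ => pointwise' F).trans ?_
  rw [Finset.sum_comm]
  refine Finset.sum_congr rfl (fun I _ => ?_)
  rw [Finset.mul_sum]
  refine Eq.trans (Finset.sum_congr rfl (fun F _ => ?_))
    (Finset.sum_filter (fun F => unionOver α I ⊆ F) (fun F => (-1) ^ I.card * w F)).symm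
  by_cases hI : unionOver α I ⊆ F <;> simp [hI]

end Poly

/-- under property I,
`χ_c(S)(t) = t^n · Σ_{F ∈ T(S)} t^{−|F|} (1 − t^{−1})^{N−|F|}`. -/
theorem stmt_3 {n r N : ℕ}
    (σ : Fin r → Finset (Fin n)) (α : Fin r → Finset (Fin N))
    (h : PropertyI σ α) :
    simpChrom σ =
      T (n : ℤ) *
        ∑ F ∈ facesOf α,
          T (-(F.card : ℤ)) * (1 - T (-1)) ^ (N - F.card) := by
  classical
  rw [faces_expand α (fun F => T (-(F.card : ℤ)) * (1 - T (-1)) ^ (N - F.card))]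
  rw [Finset.sum_congr rfl (fun I (_ : I ∈ (Finset.univ : Finset (Fin r)).powerset) => by
    rw [sum_supset (unionOver α I)] :
    ∀ I ∈ (Finset.univ : Finset (Fin r)).powerset, _ = _)]
  rw [Finset.mul_sum]
  rw [← Finset.sum_filter_add_sum_filter_not ((Finset.univ : Finset (Fin r)).powerset)
    (fun I => I.Nonempty)]
  have hempt : ((Finset.univ : Finset (Fin r)).powerset.filter (fun I => ¬ I.Nonempty)) =
      {(∅ : Finset (Fin r))} := by
    ext I
    simp [Finset.not_nonempty_iff_eq_empty]
  rw [hempt, Finset.sum_singleton]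
  have hz : (T ((n : ℤ)) : LaurentPolynomial ℤ) *
      ((-1) ^ (∅ : Finset (Fin r)).card * T (-((unionOver α ∅).card : ℤ))) = T (n : ℤ) := by
    simp [unionOver, T_zero]
  rw [hz, simpChrom, add_comm]
  congr 1
  refine Finset.sum_congr rfl (fun I hI => ?_)
  have hne : I.Nonempty := (Finset.mem_filter.1 hI).2
  have hkey := key_final h hne
  have harg : ((n : ℤ) - ((unionOver σ I).card : ℤ) + (compCount σ I : ℤ)) =
      (n : ℤ) + (-(((unionOver α I).card : ℤ))) := by omega
  rw [harg, T_add]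
  ring
end

section
/- Suppose σ_1, …, σ_r satisfy property I with witnesses α_1, …, α_r ⊆ {1,…,N}. Then χ_c(S)(t) = t^{n−N} · Σ_{F ∈ T(S)} (t − 1)^{N−|F|} in ℤ[t,t⁻¹]; that is, after multiplying by t^{N−n}, the simplicial chromatic polynomial is the f-vector generating function Σ_{j≥0} f_{j−1}(T(S)) (t−1)^{N−j} of the auxiliary complex T(S), where f_{j−1}(T(S)) is the number of faces of T(S) of cardinality j. -/
open Finset LaurentPolynomial

-- ### helper lemmas start here

section Helpers

variable {ι V W : Type*} [DecidableEq ι] [DecidableEq V] [DecidableEq W]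

lemma adj_inv_walk {X β : Type*} {G : SimpleGraph X} {f : X → β}
    (hf : ∀ u v, G.Adj u v → f u = f v) : ∀ {u v : X} (_ : G.Walk u v), f u = f v := by
  intro u v w
  induction w with
  | nil => rfl
  | cons h _ ih => exact (hf _ _ h).trans ih

/-- inclusion hom between intersection graphs -/
def homCC (σ : ι → Finset V) {C I : Finset ι} (hsub : C ⊆ I) :
    interGraph σ C →g interGraph σ I where
  toFun v := ⟨v.1, hsub v.2⟩
  map_rel' := fun {a b} hab =>
    ⟨fun hh => hab.1 (Subtype.ext (Subtype.mk_eq_mk.mp hh)), hab.2⟩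

@[simp] lemma homCC_apply (σ : ι → Finset V) {C I : Finset ι} (hsub : C ⊆ I)
    (v : {i // i ∈ C}) : (homCC σ hsub) v = ⟨v.1, hsub v.2⟩ := rfl

lemma compCount_union (σ : ι → Finset V) {C D : Finset ι}
    (hdis : Disjoint C D) (hcross : ∀ i ∈ C, ∀ j ∈ D, σ i ∩ σ j = ∅) :
    compCount σ (C ∪ D) = compCount σ C + compCount σ D := by
  classical
  set f : {i // i ∈ C ∪ D} →
      ((interGraph σ C).ConnectedComponent ⊕ (interGraph σ D).ConnectedComponent) :=
    fun v => if h : v.1 ∈ C then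
        Sum.inl ((interGraph σ C).connectedComponentMk ⟨v.1, h⟩)
      else
        Sum.inr ((interGraph σ D).connectedComponentMk
          ⟨v.1, (Finset.mem_union.mp v.2).resolve_left h⟩) with hfdef
  have hf : ∀ u v, (interGraph σ (C ∪ D)).Adj u v → f u = f v := by
    rintro u v ⟨hne, hσ⟩
    have hne' : u.1 ≠ v.1 := fun hh => hne (Subtype.ext hh)
    by_cases hu : u.1 ∈ C <;> by_cases hv : v.1 ∈ C
    · simp only [hfdef, dif_pos hu, dif_pos hv]
      exact congrArg Sum.inl (SimpleGraph.ConnectedComponent.sound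
        (SimpleGraph.Adj.reachable ⟨fun hh => hne' (Subtype.mk_eq_mk.mp hh), hσ⟩))
    · have hvD : v.1 ∈ D := (Finset.mem_union.mp v.2).resolve_left hv
      rw [hcross u.1 hu v.1 hvD] at hσ
      exact absurd hσ (by simp)
    · have huD : u.1 ∈ D := (Finset.mem_union.mp u.2).resolve_left hu
      rw [Finset.inter_comm, hcross v.1 hv u.1 huD] at hσ
      exact absurd hσ (by simp)
    · have huD : u.1 ∈ D := (Finset.mem_union.mp u.2).resolve_left hu
      have hvD : v.1 ∈ D := (Finset.mem_union.mp v.2).resolve_left hv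
      simp only [hfdef, dif_neg hu, dif_neg hv]
      exact congrArg Sum.inr (SimpleGraph.ConnectedComponent.sound
        (SimpleGraph.Adj.reachable (G := interGraph σ D)
          ⟨fun hh => hne' (Subtype.mk_eq_mk.mp hh), hσ⟩))
  have e : (interGraph σ (C ∪ D)).ConnectedComponent ≃
      ((interGraph σ C).ConnectedComponent ⊕ (interGraph σ D).ConnectedComponent) :=
    { toFun := SimpleGraph.ConnectedComponent.lift f (fun u v p _ => adj_inv_walk hf p)
      invFun := Sum.elim
        (SimpleGraph.ConnectedComponent.map (homCC σ Finset.subset_union_left))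
        (SimpleGraph.ConnectedComponent.map (homCC σ Finset.subset_union_right))
      left_inv := by
        refine SimpleGraph.ConnectedComponent.ind ?_
        intro v
        simp only [SimpleGraph.ConnectedComponent.lift_mk, hfdef]
        by_cases hv : v.1 ∈ C
        · simp only [dif_pos hv, Sum.elim_inl, SimpleGraph.ConnectedComponent.map_mk]
          rfl
        · simp only [dif_neg hv, Sum.elim_inr, SimpleGraph.ConnectedComponent.map_mk]
          rfl
      right_inv := by
        rintro (c | c)
        · refine SimpleGraph.ConnectedComponent.ind (fun w => ?_) c
          simp only [Sum.elim_inl, SimpleGraph.ConnectedComponent.map_mk,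
            SimpleGraph.ConnectedComponent.lift_mk, hfdef, homCC_apply]
          rw [dif_pos w.2]
        · refine SimpleGraph.ConnectedComponent.ind (fun w => ?_) c
          have hw : w.1 ∉ C := fun hc => (Finset.disjoint_left.mp hdis hc) w.2
          simp only [Sum.elim_inr, SimpleGraph.ConnectedComponent.map_mk,
            SimpleGraph.ConnectedComponent.lift_mk, hfdef, homCC_apply]
          rw [dif_neg hw] }
  rw [compCount, compCount, compCount, Nat.card_congr e, Nat.card_sum]

lemma compCount_eq_one (σ : ι → Finset V) {I : Finset ι} {i₀ : ι} (hi₀ : i₀ ∈ I)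
    (hconn : ∀ i (hi : i ∈ I), (interGraph σ I).Reachable ⟨i₀, hi₀⟩ ⟨i, hi⟩) :
    compCount σ I = 1 := by
  rw [compCount, Nat.card_eq_one_iff_unique]
  constructor
  · refine SimpleGraph.Preconnected.subsingleton_connectedComponent ?_
    intro u v
    exact (hconn u.1 u.2).symm.trans (hconn v.1 v.2)
  · exact ⟨(interGraph σ I).connectedComponentMk ⟨i₀, hi₀⟩⟩

lemma grow (σ : ι → Finset V) (α : ι → Finset W) (h : PropertyI σ α) (I : Finset ι)
    (hstep : ∀ J ⊆ I, J.Nonempty → J ≠ I →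
      ∃ p ∈ I, p ∉ J ∧ (unionOver σ J ∩ σ p).Nonempty) :
    ∀ (k : ℕ) (J : Finset ι), J ⊆ I → J.Nonempty → (I \ J).card ≤ k →
      (unionOver α J).card + 1 = (unionOver σ J).card →
      (unionOver α I).card + 1 = (unionOver σ I).card := by
  intro k
  induction k with
  | zero =>
    intro J hJI hJne hcard hinv
    have : I \ J = ∅ := Finset.card_eq_zero.mp (Nat.le_zero.mp hcard)
    have hIJ : I ⊆ J := Finset.sdiff_eq_empty_iff_subset.mp this
    rwa [Finset.Subset.antisymm hJI hIJ] at hinv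
  | succ k ih =>
    intro J hJI hJne hcard hinv
    by_cases hJeq : J = I
    · rwa [hJeq] at hinv
    · obtain ⟨p, hpI, hpJ, hne⟩ := hstep J hJI hJne hJeq
      have h1 : (unionOver α J ∩ α p).card + 1 = (unionOver σ J ∩ σ p).card :=
        (h.2 J hJne p hpJ).2 hne
      have ea : unionOver α (insert p J) = unionOver α J ∪ α p := by
        rw [unionOver, Finset.sup_insert]
        exact sup_comm _ _
      have es : unionOver σ (insert p J) = unionOver σ J ∪ σ p := by
        rw [unionOver, Finset.sup_insert]
        exact sup_comm _ _
      have ca := Finset.card_union_add_card_inter (unionOver α J) (α p)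
      have cs := Finset.card_union_add_card_inter (unionOver σ J) (σ p)
      rw [← ea] at ca
      rw [← es] at cs
      have hp := h.1 p
      have hinv' : (unionOver α (insert p J)).card + 1 = (unionOver σ (insert p J)).card := by
        omega
      have hsub' : insert p J ⊆ I := Finset.insert_subset hpI hJI
      have hcard' : (I \ insert p J).card ≤ k := by
        have : I \ insert p J = (I \ J).erase p := by
          rw [Finset.sdiff_insert]
        rw [this, Finset.card_erase_of_mem (Finset.mem_sdiff.mpr ⟨hpI, hpJ⟩)]
        omega
      exact ih (insert p J) hsub' (Finset.insert_nonempty _ _) hcard' hinv'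

lemma key (σ : ι → Finset V) (α : ι → Finset W) (h : PropertyI σ α) :
    ∀ I : Finset ι, I.Nonempty →
      (unionOver α I).card + compCount σ I = (unionOver σ I).card := by
  classical
  intro I
  induction I using Finset.strongInductionOn with
  | _ I ih =>
  intro hI
  obtain ⟨i₀, hi₀⟩ := hI
  set C : Finset ι := I.filter
    (fun i => ∃ hi : i ∈ I, (interGraph σ I).Reachable ⟨i₀, hi₀⟩ ⟨i, hi⟩) with hCdef
  have hCsub : C ⊆ I := Finset.filter_subset _ _
  have hi₀C : i₀ ∈ C := by
    rw [hCdef, Finset.mem_filter]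
    exact ⟨hi₀, hi₀, SimpleGraph.Reachable.refl _⟩
  by_cases hCI : C = I
  · -- connected case
    have hconn : ∀ i (hi : i ∈ I), (interGraph σ I).Reachable ⟨i₀, hi₀⟩ ⟨i, hi⟩ := by
      intro i hi
      have : i ∈ C := hCI ▸ hi
      rw [hCdef, Finset.mem_filter] at this
      obtain ⟨_, _, hr⟩ := this
      exact hr
    have hc1 : compCount σ I = 1 := compCount_eq_one σ hi₀ hconn
    have hstep : ∀ J ⊆ I, J.Nonempty → J ≠ I →
        ∃ p ∈ I, p ∉ J ∧ (unionOver σ J ∩ σ p).Nonempty := by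
      intro J hJI hJne hJeq
      obtain ⟨j₀, hj₀⟩ := hJne
      have hIJ : ¬ I ⊆ J := fun hIJ => hJeq (Finset.Subset.antisymm hJI hIJ)
      obtain ⟨p₀, hp₀I, hp₀J⟩ := Finset.not_subset.mp hIJ
      have hr : (interGraph σ I).Reachable ⟨j₀, hJI hj₀⟩ ⟨p₀, hp₀I⟩ :=
        (hconn j₀ (hJI hj₀)).symm.trans (hconn p₀ hp₀I)
      obtain ⟨w⟩ := hr
      obtain ⟨d, _, hdfst, hdsnd⟩ :=
        w.exists_boundary_dart ({v : {i // i ∈ I} | v.1 ∈ J}) hj₀ hp₀J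
      refine ⟨d.snd.1, d.snd.2, hdsnd, ?_⟩
      obtain ⟨x, hx⟩ := d.adj.2
      refine ⟨x, Finset.mem_inter.mpr ⟨?_, (Finset.mem_inter.mp hx).2⟩⟩
      rw [unionOver]
      exact Finset.mem_sup.mpr ⟨d.fst.1, hdfst, (Finset.mem_inter.mp hx).1⟩
    have base : (unionOver α {i₀}).card + 1 = (unionOver σ {i₀}).card := by
      rw [unionOver, unionOver, Finset.sup_singleton, Finset.sup_singleton]
      exact h.1 i₀
    have := grow σ α h I hstep (I \ {i₀}).card {i₀}
      (Finset.singleton_subset_iff.mpr hi₀) (Finset.singleton_nonempty _) le_rfl base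
    omega
  · -- disconnected case
    set D : Finset ι := I \ C with hDdef
    have hCD : C ∪ D = I := Finset.union_sdiff_of_subset hCsub
    have hdis : Disjoint C D := Finset.disjoint_sdiff
    have hCne : C.Nonempty := ⟨i₀, hi₀C⟩
    have hDne : D.Nonempty := by
      rw [hDdef]
      rw [Finset.sdiff_nonempty]
      exact fun hsub => hCI (Finset.Subset.antisymm hCsub hsub)
    have hcross : ∀ i ∈ C, ∀ j ∈ D, σ i ∩ σ j = ∅ := by
      intro i hiC j hjD
      by_contra hne
      have hne' : (σ i ∩ σ j).Nonempty := Finset.nonempty_iff_ne_empty.mpr hne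
      have hiI : i ∈ I := hCsub hiC
      have hjI : j ∈ I := (Finset.mem_sdiff.mp hjD).1
      have hjC : j ∉ C := (Finset.mem_sdiff.mp hjD).2
      have hij : i ≠ j := fun hh => hjC (hh ▸ hiC)
      have hadj : (interGraph σ I).Adj ⟨i, hiI⟩ ⟨j, hjI⟩ :=
        ⟨fun hh => hij (congrArg Subtype.val hh), hne'⟩
      rw [hCdef, Finset.mem_filter] at hiC
      obtain ⟨_, _, hri⟩ := hiC
      have : j ∈ C := by
        rw [hCdef, Finset.mem_filter]
        exact ⟨hjI, hjI, hri.trans hadj.reachable⟩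
      exact hjC this
    -- α side disjointness
    have hαdis : Disjoint (unionOver α C) (unionOver α D) := by
      rw [Finset.disjoint_left]
      intro x hxC hxD
      rw [unionOver, Finset.mem_sup] at hxD
      obtain ⟨p, hpD, hxp⟩ := hxD
      have hpC : p ∉ C := Finset.disjoint_right.mp hdis hpD
      have hσ : unionOver σ C ∩ σ p = ∅ := by
        rw [Finset.eq_empty_iff_forall_notMem]
        intro y hy
        rw [Finset.mem_inter, unionOver, Finset.mem_sup] at hy
        obtain ⟨⟨i, hiC, hyi⟩, hyp⟩ := hy
        have := hcross i hiC p hpD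
        rw [Finset.eq_empty_iff_forall_notMem] at this
        exact this y (Finset.mem_inter.mpr ⟨hyi, hyp⟩)
      have hα := (h.2 C hCne p hpC).1 hσ
      rw [Finset.eq_empty_iff_forall_notMem] at hα
      exact hα x (Finset.mem_inter.mpr ⟨hxC, hxp⟩)
    have hσdis : Disjoint (unionOver σ C) (unionOver σ D) := by
      rw [Finset.disjoint_left]
      intro x hxC hxD
      rw [unionOver, Finset.mem_sup] at hxC hxD
      obtain ⟨i, hiC, hxi⟩ := hxC
      obtain ⟨j, hjD, hxj⟩ := hxD
      have := hcross i hiC j hjD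
      rw [Finset.eq_empty_iff_forall_notMem] at this
      exact this x (Finset.mem_inter.mpr ⟨hxi, hxj⟩)
    have hαu : unionOver α I = unionOver α C ∪ unionOver α D := by
      rw [← hCD, unionOver, Finset.sup_union]; rfl
    have hσu : unionOver σ I = unionOver σ C ∪ unionOver σ D := by
      rw [← hCD, unionOver, Finset.sup_union]; rfl
    have hcc : compCount σ I = compCount σ C + compCount σ D := by
      rw [← hCD]; exact compCount_union σ hdis hcross
    have hCss : C ⊂ I := Finset.ssubset_iff_subset_ne.mpr ⟨hCsub, hCI⟩
    have hDss : D ⊂ I := Finset.sdiff_ssubset hCsub hCne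
    have ihC := ih C hCss hCne
    have ihD := ih D hDss hDne
    rw [hαu, hσu, Finset.card_union_of_disjoint hαdis, Finset.card_union_of_disjoint hσdis, hcc]
    omega

end Helpers

section Algebra

open LaurentPolynomial

variable {R : Type*} [CommRing R]

lemma sum_pow_card (x : R) {β : Type*} [DecidableEq β] (s : Finset β) :
    ∑ t ∈ s.powerset, x ^ t.card = (x + 1) ^ s.card := by
  have hp := Finset.prod_add (fun _ : β => x) (fun _ : β => 1) s
  simp only [Finset.prod_const, Finset.prod_const_one, one_pow, mul_one] at hp
  exact hp.symm

lemma sum_neg_one_pow_card {β : Type*} [DecidableEq β] (s : Finset β) :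
    ∑ t ∈ s.powerset, (-1 : R) ^ t.card = if s = ∅ then 1 else 0 := by
  rw [sum_pow_card, neg_add_cancel]
  split_ifs with hs
  · subst hs; simp
  · rw [zero_pow]
    simpa [Finset.card_eq_zero] using hs

lemma sum_pow_card_powerset (x : R) {β : Type*} [DecidableEq β] (s : Finset β) :
    ∑ t ∈ s.powerset, x ^ (s.card - t.card) = (x + 1) ^ s.card := by
  rw [← sum_pow_card x s]
  refine Finset.sum_nbij' (fun t => s \ t) (fun t => s \ t) ?_ ?_ ?_ ?_ ?_
  · intro t _; exact Finset.mem_powerset.mpr Finset.sdiff_subset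
  · intro t _; exact Finset.mem_powerset.mpr Finset.sdiff_subset
  · intro t ht; exact Finset.sdiff_sdiff_eq_self (Finset.mem_powerset.mp ht)
  · intro t ht; exact Finset.sdiff_sdiff_eq_self (Finset.mem_powerset.mp ht)
  · intro t ht; rw [Finset.card_sdiff_of_subset (Finset.mem_powerset.mp ht)]

lemma sum_over_supersets (x : R) {N : ℕ} (A : Finset (Fin N)) :
    ∑ F ∈ (univ : Finset (Finset (Fin N))).filter (fun F => A ⊆ F), x ^ (N - F.card)
      = (x + 1) ^ (N - A.card) := by
  have hA : A.card ≤ N := by simpa using Finset.card_le_univ A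
  have hcompl : Aᶜ.card = N - A.card := by rw [Finset.card_compl]; simp
  rw [← hcompl, ← sum_pow_card_powerset x Aᶜ]
  refine Finset.sum_nbij' (fun F => F \ A) (fun G => A ∪ G) ?_ ?_ ?_ ?_ ?_
  · intro F hF
    rw [Finset.mem_filter] at hF
    refine Finset.mem_powerset.mpr fun y hy => ?_
    rw [Finset.mem_sdiff] at hy
    exact Finset.mem_compl.mpr hy.2
  · intro G _
    exact Finset.mem_filter.mpr ⟨Finset.mem_univ _, Finset.subset_union_left⟩
  · intro F hF
    rw [Finset.mem_filter] at hF
    exact Finset.union_sdiff_of_subset hF.2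
  · intro G hG
    have hdis : Disjoint A G := by
      rw [Finset.disjoint_left]; intro y hyA hyG
      exact (Finset.mem_compl.mp (Finset.mem_powerset.mp hG hyG)) hyA
    rw [Finset.union_sdiff_cancel_left hdis]
  · intro F hF
    rw [Finset.mem_filter] at hF
    have h1 : (F \ A).card = F.card - A.card := Finset.card_sdiff_of_subset hF.2
    have h2 : A.card ≤ F.card := Finset.card_le_card hF.2
    have h3 : F.card ≤ N := by simpa using Finset.card_le_univ F
    rw [hcompl, h1]
    congr 1
    omega

lemma inclusion_exclusion {r N : ℕ} (α : Fin r → Finset (Fin N)) (x : R) :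
    ∑ F ∈ facesOf α, x ^ (N - F.card) =
      ∑ I ∈ (univ : Finset (Finset (Fin r))),
        (-1 : R) ^ I.card * (x + 1) ^ (N - (unionOver α I).card) := by
  classical
  have hinner : ∀ F : Finset (Fin N),
      (∑ I ∈ (univ : Finset (Finset (Fin r))),
        if unionOver α I ⊆ F then (-1 : R) ^ I.card else 0)
      = (if ∀ i, ¬ α i ⊆ F then 1 else 0) := by
    intro F
    have hiff : ∀ I : Finset (Fin r),
        unionOver α I ⊆ F ↔ I ∈ (univ.filter (fun i => α i ⊆ F)).powerset := by
      intro I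
      rw [Finset.mem_powerset, unionOver]
      constructor
      · intro hs i hiI
        refine Finset.mem_filter.mpr ⟨Finset.mem_univ _, fun y hy => ?_⟩
        exact hs (Finset.mem_sup.mpr ⟨i, hiI, hy⟩)
      · intro hs y hy
        rw [Finset.mem_sup] at hy
        obtain ⟨i, hiI, hyi⟩ := hy
        exact (Finset.mem_filter.mp (hs hiI)).2 hyi
    rw [Finset.sum_congr rfl (fun I _ => if_congr (hiff I) rfl rfl)]
    rw [Finset.sum_ite_mem, Finset.univ_inter]
    rw [sum_neg_one_pow_card]
    exact if_congr (by rw [Finset.filter_eq_empty_iff]; simp) rfl rfl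
  calc ∑ F ∈ facesOf α, x ^ (N - F.card)
      = ∑ F ∈ (univ : Finset (Finset (Fin N))),
          (if ∀ i, ¬ α i ⊆ F then (1 : R) else 0) * x ^ (N - F.card) := by
        rw [facesOf, Finset.sum_filter]
        refine Finset.sum_congr rfl fun F _ => ?_
        split_ifs <;> simp
    _ = ∑ F ∈ (univ : Finset (Finset (Fin N))),
          (∑ I ∈ (univ : Finset (Finset (Fin r))),
            if unionOver α I ⊆ F then (-1 : R) ^ I.card else 0) * x ^ (N - F.card) := by
        refine Finset.sum_congr rfl fun F _ => ?_
        rw [hinner F]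
    _ = ∑ I ∈ (univ : Finset (Finset (Fin r))),
          ∑ F ∈ (univ : Finset (Finset (Fin N))),
            (if unionOver α I ⊆ F then (-1 : R) ^ I.card else 0) * x ^ (N - F.card) := by
        rw [Finset.sum_comm]
        refine Finset.sum_congr rfl fun F _ => ?_
        rw [Finset.sum_mul]
    _ = ∑ I ∈ (univ : Finset (Finset (Fin r))),
          (-1 : R) ^ I.card *
            ∑ F ∈ (univ : Finset (Finset (Fin N))).filter (fun F => unionOver α I ⊆ F),
              x ^ (N - F.card) := by
        refine Finset.sum_congr rfl fun I _ => ?_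
        rw [Finset.mul_sum, Finset.sum_filter]
        refine Finset.sum_congr rfl fun F _ => ?_
        split_ifs <;> simp
    _ = _ := by
        refine Finset.sum_congr rfl fun I _ => ?_
        rw [sum_over_supersets]

end Algebra


/-- under property I,
`χ_c(S)(t) = t^{n−N} · Σ_{F ∈ T(S)} (t − 1)^{N−|F|}`. -/
theorem stmt_4 {n r N : ℕ}
    (σ : Fin r → Finset (Fin n)) (α : Fin r → Finset (Fin N))
    (h : PropertyI σ α) :
    simpChrom σ =
      T ((n : ℤ) - N) *
        ∑ F ∈ facesOf α, (T 1 - 1) ^ (N - F.card) := by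
  classical
  have hkey := key σ α h
  rw [inclusion_exclusion α (T 1 - 1)]
  have hx : (T 1 - 1 : LaurentPolynomial ℤ) + 1 = T 1 := sub_add_cancel _ _
  rw [hx, Finset.mul_sum]
  have hterm : ∀ I : Finset (Fin r),
      T ((n : ℤ) - N) * ((-1 : LaurentPolynomial ℤ) ^ I.card *
          (T 1) ^ (N - (unionOver α I).card))
        = (-1 : LaurentPolynomial ℤ) ^ I.card *
            T ((n : ℤ) - N + ((N - (unionOver α I).card : ℕ) : ℤ)) := by
    intro I
    rw [T_pow, mul_one, T_add]
    ring
  rw [Finset.sum_congr rfl (fun I _ => hterm I)]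
  rw [← Finset.sum_filter_add_sum_filter_not (univ : Finset (Finset (Fin r)))
    (fun I => I.Nonempty)]
  have hempty : (univ : Finset (Finset (Fin r))).filter (fun I => ¬ I.Nonempty) = {∅} := by
    ext I; simp [Finset.not_nonempty_iff_eq_empty]
  rw [hempty, Finset.sum_singleton]
  have hemptyterm : ((-1 : LaurentPolynomial ℤ) ^ (∅ : Finset (Fin r)).card *
      T ((n : ℤ) - N + ((N - (unionOver α (∅ : Finset (Fin r))).card : ℕ) : ℤ)))
      = T (n : ℤ) := by
    have h0 : unionOver α (∅ : Finset (Fin r)) = ∅ := rfl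
    rw [h0]
    simp only [Finset.card_empty, pow_zero, one_mul, Nat.sub_zero]
    congr 1
    omega
  rw [hemptyterm, simpChrom, Finset.powerset_univ, add_comm]
  congr 1
  refine Finset.sum_congr rfl fun I hI => ?_
  have hIne : I.Nonempty := (Finset.mem_filter.mp hI).2
  have h1 := hkey I hIne
  have h2 : (unionOver α I).card ≤ N := by simpa using Finset.card_le_univ (unionOver α I)
  rw [show ((n : ℤ) - ((unionOver σ I).card : ℤ) + (compCount σ I : ℤ))
      = ((n : ℤ) - N + ((N - (unionOver α I).card : ℕ) : ℤ)) from by omega]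
end

section
/- (Proposition on the constant-component case) Suppose there is a ≥ 1 such that c(I) = a for every nonempty I ⊆ {1,…,r}. Then in ℤ[t,t⁻¹]: χ_c(S)(t) − t^n = t^{n+a} (K(t^{−1}) − 1), where K(x) = Σ_{I⊆{1,…,r}} (−1)^{|I|} x^{|σ_I|} is the numerator of the Hilbert–Poincaré series of the Stanley–Reisner ring of S itself. -/
open Finset LaurentPolynomial

/-- if `c(I) = a ≥ 1` for every nonempty `I`, then
`χ_c(S)(t) − t^n = t^{n+a} (K(t^{−1}) − 1)` where
`K(x) = Σ_{I⊆[r]} (−1)^{|I|} x^{|σ_I|}`. -/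
theorem stmt_5 {n r : ℕ} (σ : Fin r → Finset (Fin n)) (a : ℕ) (ha : 1 ≤ a)
    (hc : ∀ I : Finset (Fin r), I.Nonempty → compCount σ I = a) :
    simpChrom σ - T (n : ℤ) =
      T ((n : ℤ) + a) *
        ((∑ I ∈ (univ : Finset (Fin r)).powerset,
            (-1) ^ I.card * T (-((unionOver σ I).card : ℤ))) - 1) := by
  have h0 : ((univ : Finset (Fin r)).powerset.filter (fun I => ¬ I.Nonempty)) = {∅} := by
    ext I
    simp [Finset.not_nonempty_iff_eq_empty]
  rw [← Finset.sum_filter_add_sum_filter_not ((univ : Finset (Fin r)).powerset)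
      (fun I => I.Nonempty), h0, Finset.sum_singleton]
  simp only [unionOver, Finset.sup_empty, Finset.card_empty, Finset.bot_eq_empty,
    Nat.cast_zero, neg_zero, Finset.card_empty, pow_zero, T_zero, mul_one]
  rw [add_sub_cancel_right, Finset.mul_sum]
  rw [simpChrom, add_sub_cancel_left]
  refine Finset.sum_congr rfl (fun I hI => ?_)
  have hne : I.Nonempty := (Finset.mem_filter.mp hI).2
  rw [hc I hne, mul_left_comm, ← T_add]
  congr 2
  simp [unionOver]; ring
end

section
/- If σ_i ∩ σ_j ≠ ∅ for all 1 ≤ i, j ≤ r, then c(I) = 1 for every nonempty I ⊆ {1,…,r}, and consequently χ_c(S)(t) − t^n = t^{n+1} (K(t^{−1}) − 1) in ℤ[t,t⁻¹], where K(x) = Σ_{I⊆{1,…,r}} (−1)^{|I|} x^{|σ_I|}. -/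
open Finset LaurentPolynomial

/-- if `σ_i ∩ σ_j ≠ ∅` for all `i, j`, then `c(I) = 1` for every nonempty `I`,
and `χ_c(S)(t) − t^n = t^{n+1} (K(t^{−1}) − 1)` with `K(x) = Σ_{I⊆[r]} (−1)^{|I|} x^{|σ_I|}`. -/
theorem stmt_6 {n r : ℕ} (σ : Fin r → Finset (Fin n))
    (h : ∀ i j, (σ i ∩ σ j).Nonempty) :
    (∀ I : Finset (Fin r), I.Nonempty → compCount σ I = 1) ∧
    simpChrom σ - T (n : ℤ) =
      T ((n : ℤ) + 1) *
        ((∑ I ∈ (univ : Finset (Fin r)).powerset,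
            (-1) ^ I.card * T (-((unionOver σ I).card : ℤ))) - 1) := by
  have hc : ∀ I : Finset (Fin r), I.Nonempty → compCount σ I = 1 := by
    intro I hI
    have hsub : Subsingleton (interGraph σ I).ConnectedComponent := by
      constructor
      intro a b
      refine SimpleGraph.ConnectedComponent.ind₂ (fun i j => ?_) a b
      apply SimpleGraph.ConnectedComponent.sound
      by_cases hij : i = j
      · subst hij; exact SimpleGraph.Reachable.refl _
      · exact SimpleGraph.Adj.reachable ⟨hij, h i.1 j.1⟩
    have hne : Nonempty (interGraph σ I).ConnectedComponent := by
      obtain ⟨i, hi⟩ := hI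
      exact ⟨(interGraph σ I).connectedComponentMk ⟨i, hi⟩⟩
    unfold compCount
    exact Nat.card_eq_one_iff_unique.mpr ⟨hsub, hne⟩
  refine ⟨hc, ?_⟩
  have hsplit :
      (∑ I ∈ (univ : Finset (Fin r)).powerset,
          (-1 : LaurentPolynomial ℤ) ^ I.card * T (-((unionOver σ I).card : ℤ))) =
      (∑ I ∈ (univ : Finset (Fin r)).powerset.filter (fun I => I.Nonempty),
          (-1 : LaurentPolynomial ℤ) ^ I.card * T (-((unionOver σ I).card : ℤ))) + 1 := by
    rw [← Finset.sum_filter_add_sum_filter_not (univ : Finset (Fin r)).powerset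
        (fun I => I.Nonempty)]
    congr 1
    have he : (univ : Finset (Fin r)).powerset.filter (fun I => ¬ I.Nonempty) = {∅} := by
      ext J
      simp [Finset.not_nonempty_iff_eq_empty]
    rw [he, Finset.sum_singleton]
    simp [unionOver]
  rw [hsplit]
  simp only [add_sub_cancel_right]
  rw [Finset.mul_sum]
  unfold simpChrom
  rw [add_sub_cancel_left]
  apply Finset.sum_congr rfl
  intro I hI
  have hIne : I.Nonempty := (Finset.mem_filter.mp hI).2
  rw [hc I hIne]
  have : (n : ℤ) - ((unionOver σ I).card : ℤ) + ((1 : ℕ) : ℤ) =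
      ((n : ℤ) + 1) + (-((unionOver σ I).card : ℤ)) := by push_cast; ring
  rw [this, T_add]
  ring
end
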